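/- Let (Ω, ℙ) be a probability space, P ≥ 1, n ≥ 1, K ≤ n, σ ≥ 0. Let ε : Fin P → Fin n → Ω → ℝ be a jointly independent family of square-integrable random variables with mean 0 and E[ε_{j,i}²] = σ². Fix j₀ ∈ Fin P, fixed weights w : Fin n → ℝ, a subset W ⊆ Fin n of size K, and constants ℓ : W → ℝ with ℓ_k ≠ 0. Define ΔL = Σ_{i ∈ Fin n} w_i·(Σ_{j ∈ Fin P} ε_{j,i}) and ΔS = (1/K)·Σ_{k ∈ W} ε_{j₀,k}/ℓ_k. Then E[ΔL·ΔS] = (σ²/K)·Σ_{k ∈ W} w_k/ℓ_k. -/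

import Mathlib

open MeasureTheory ProbabilityTheory

lemma memL2_mul_integrable {Ω : Type*} [MeasureSpace Ω]
    {f g : Ω → ℝ} (hf : MemLp f 2 ℙ) (hg : MemLp g 2 ℙ) :
    Integrable (fun ω => f ω * g ω) ℙ := by
  have h : MemLp (f • g) 1 ℙ := hg.smul hf
  exact memLp_one_iff_integrable.mp h

/-- **Level–Shape cross-covariance formula (Step 4 of the proof of Theorem 2).**
For a jointly independent, mean-zero family `ε_{j,i}` with `E[ε_{j,i}²] = σ²`,
fixed weights `w`, a `K`-element window `W`, and nonzero constants `ℓ_k` on `W`,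
the Level error `ΔL = Σ_i w_i·(Σ_j ε_{j,i})` and the oracle Shape error
`ΔS = (1/K)·Σ_{k∈W} ε_{j₀,k}/ℓ_k` satisfy
`E[ΔL·ΔS] = (σ²/K)·Σ_{k∈W} w_k/ℓ_k`. -/
theorem level_shape_cross_covariance
    {Ω : Type*} [MeasureSpace Ω] [IsProbabilityMeasure (ℙ : Measure Ω)]
    (P n K : ℕ) (hP : 1 ≤ P) (hn : 1 ≤ n) (hKn : K ≤ n) (σ : ℝ) (hσ : 0 ≤ σ)
    (ε : Fin P → Fin n → Ω → ℝ)
    (hmeas : ∀ j i, Measurable (ε j i))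
    (hL2 : ∀ j i, MemLp (ε j i) 2 ℙ)
    (hindep : iIndepFun
      (fun p : Fin P × Fin n => ε p.1 p.2) ℙ)
    (hmean : ∀ j i, (∫ ω : Ω, ε j i ω ∂ℙ) = 0)
    (hvar : ∀ j i, (∫ ω : Ω, (ε j i ω) ^ 2 ∂ℙ) = σ ^ 2)
    (j₀ : Fin P) (w : Fin n → ℝ)
    (W : Finset (Fin n)) (hW : W.card = K)
    (ℓ : Fin n → ℝ) (hℓ : ∀ k ∈ W, ℓ k ≠ 0) :
    (∫ ω : Ω, (∑ i : Fin n, w i * ∑ j : Fin P, ε j i ω)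
        * ((K : ℝ)⁻¹ * ∑ k ∈ W, ε j₀ k ω / ℓ k) ∂ℙ)
      = (σ ^ 2 / K) * ∑ k ∈ W, w k / ℓ k := by
  -- expectation of a single product
  have key : ∀ (j : Fin P) (i k : Fin n),
      (∫ ω : Ω, ε j i ω * ε j₀ k ω ∂ℙ)
        = if j = j₀ ∧ i = k then σ ^ 2 else 0 := by
    intro j i k
    by_cases h : j = j₀ ∧ i = k
    · obtain ⟨h1, h2⟩ := h
      subst h1; subst h2
      rw [if_pos ⟨rfl, rfl⟩, ← hvar j i]
      congr 1; ext ω; ring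
    · have hne : (j, i) ≠ (j₀, k) := by
        simp only [Ne, Prod.mk.injEq]; exact h
      have hind : IndepFun (ε j i) (ε j₀ k) ℙ := hindep.indepFun hne
      rw [if_neg h]
      have := hind.integral_mul_eq_mul_integral (hmeas j i).aestronglyMeasurable
        (hmeas j₀ k).aestronglyMeasurable
      simp only [hmean, mul_zero] at this
      simpa using this
  -- rewrite the integrand as a finite sum of products
  have hpt : ∀ ω : Ω,
      (∑ i : Fin n, w i * ∑ j : Fin P, ε j i ω)
          * ((K : ℝ)⁻¹ * ∑ k ∈ W, ε j₀ k ω / ℓ k)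
        = ∑ i : Fin n, ∑ j : Fin P, ∑ k ∈ W,
            (w i * ((K : ℝ)⁻¹ / ℓ k)) * (ε j i ω * ε j₀ k ω) := by
    intro ω
    simp only [Finset.mul_sum, Finset.sum_mul]
    rw [Finset.sum_comm]
    refine Finset.sum_congr rfl fun i _ => ?_
    rw [Finset.sum_comm]
    refine Finset.sum_congr rfl fun j _ => Finset.sum_congr rfl fun k _ => by ring
  have hint : ∀ (i : Fin n) (j : Fin P) (k : Fin n),
      Integrable (fun ω => (w i * ((K : ℝ)⁻¹ / ℓ k)) * (ε j i ω * ε j₀ k ω)) ℙ :=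
    fun i j k => (memL2_mul_integrable (hL2 j i) (hL2 j₀ k)).const_mul _
  calc (∫ ω : Ω, (∑ i : Fin n, w i * ∑ j : Fin P, ε j i ω)
          * ((K : ℝ)⁻¹ * ∑ k ∈ W, ε j₀ k ω / ℓ k) ∂ℙ)
      = ∫ ω : Ω, ∑ i : Fin n, ∑ j : Fin P, ∑ k ∈ W,
          (w i * ((K : ℝ)⁻¹ / ℓ k)) * (ε j i ω * ε j₀ k ω) ∂ℙ := by
        exact integral_congr_ae (Filter.Eventually.of_forall hpt)
    _ = ∑ i : Fin n, ∑ j : Fin P, ∑ k ∈ W,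
          (w i * ((K : ℝ)⁻¹ / ℓ k)) * ∫ ω : Ω, ε j i ω * ε j₀ k ω ∂ℙ := by
        rw [integral_finset_sum _ fun i _ => (integrable_finset_sum _
          fun j _ => integrable_finset_sum _ fun k _ => hint i j k)]
        refine Finset.sum_congr rfl fun i _ => ?_
        rw [integral_finset_sum _ fun j _ =>
          integrable_finset_sum _ fun k _ => hint i j k]
        refine Finset.sum_congr rfl fun j _ => ?_
        rw [integral_finset_sum _ fun k _ => hint i j k]
        exact Finset.sum_congr rfl fun k _ => integral_const_mul _ _
    _ = ∑ i : Fin n, ∑ j : Fin P, ∑ k ∈ W,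
          (w i * ((K : ℝ)⁻¹ / ℓ k)) * (if j = j₀ ∧ i = k then σ ^ 2 else 0) := by
        refine Finset.sum_congr rfl fun i _ => Finset.sum_congr rfl fun j _ =>
          Finset.sum_congr rfl fun k _ => ?_
        rw [key]
    _ = ∑ k ∈ W, (w k * ((K : ℝ)⁻¹ / ℓ k)) * σ ^ 2 := by
        rw [Finset.sum_comm]
        rw [Finset.sum_eq_single j₀]
        · rw [Finset.sum_comm]
          refine Finset.sum_congr rfl fun k hk => ?_
          rw [Finset.sum_eq_single k]
          · simp
          · intro i _ hik; simp [hik]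
          · simp
        · intro j _ hj
          exact Finset.sum_eq_zero fun i _ =>
            Finset.sum_eq_zero fun k _ => by simp [hj]
        · simp
    _ = (σ ^ 2 / K) * ∑ k ∈ W, w k / ℓ k := by
        rw [Finset.mul_sum]
        exact Finset.sum_congr rfl fun k _ => by ring
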